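/- arXiv:1510.04118 — 2 statements merged into one kernel-verified Lean document; each statement's English description precedes it below -/
import Mathlib

section
/- Let $X$ be a $p \times p$ real matrix with operator norm $\|X\| < 1$. Then $X - \mathrm{Id}_p$ is invertible, and the matrix $Y = (X + \mathrm{Id}_p)(X - \mathrm{Id}_p)^{-1}$ satisfies $Y^t + Y < 0$ (i.e. $-(Y^t + Y)$ is positive definite). -/
open Matrix

private lemma dot_eq_normsq {p : ℕ} (x : Fin p → ℝ) :
    dotProduct x x = ‖(WithLp.equiv 2 (Fin p → ℝ)).symm x‖ ^ 2 := by
  rw [← real_inner_self_eq_norm_sq, WithLp.equiv_symm_apply, EuclideanSpace.inner_toLp_toLp, star_trivial]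

private lemma posdef_one_sub {p : ℕ} (X : Matrix (Fin p) (Fin p) ℝ)
    (hX : ‖Matrix.toEuclideanCLM (𝕜 := ℝ) X‖ < 1) :
    (1 - Xᵀ * X).PosDef := by
  rw [posDef_iff_dotProduct_mulVec]
  constructor
  · unfold Matrix.IsHermitian
    simp [conjTranspose_eq_transpose_of_trivial, transpose_sub, transpose_mul]
  · intro x hx
    have key : dotProduct (star x) ((1 - Xᵀ * X) *ᵥ x)
        = dotProduct x x - dotProduct (X *ᵥ x) (X *ᵥ x) := by
      rw [star_trivial, sub_mulVec, one_mulVec, dotProduct_sub, ← mulVec_mulVec,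
        dotProduct_mulVec, vecMul_transpose]
    rw [key]
    have hv : (WithLp.equiv 2 (Fin p → ℝ)).symm x ≠ 0 := by
      simpa using hx
    have hb : ‖Matrix.toEuclideanCLM (𝕜 := ℝ) X ((WithLp.equiv 2 (Fin p → ℝ)).symm x)‖
        < ‖(WithLp.equiv 2 (Fin p → ℝ)).symm x‖ := by
      calc ‖Matrix.toEuclideanCLM (𝕜 := ℝ) X ((WithLp.equiv 2 (Fin p → ℝ)).symm x)‖
          ≤ ‖Matrix.toEuclideanCLM (𝕜 := ℝ) X‖ * ‖(WithLp.equiv 2 (Fin p → ℝ)).symm x‖ :=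
            (Matrix.toEuclideanCLM (𝕜 := ℝ) X).le_opNorm _
        _ < 1 * ‖(WithLp.equiv 2 (Fin p → ℝ)).symm x‖ := by
            exact mul_lt_mul_of_pos_right hX (norm_pos_iff.mpr hv)
        _ = _ := one_mul _
    have hXv : dotProduct (X *ᵥ x) (X *ᵥ x)
        = ‖Matrix.toEuclideanCLM (𝕜 := ℝ) X ((WithLp.equiv 2 (Fin p → ℝ)).symm x)‖ ^ 2 := by
      rw [WithLp.equiv_symm_apply, Matrix.toEuclideanCLM_toLp]
      exact dot_eq_normsq _
    rw [dot_eq_normsq x, hXv]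
    have := sq_lt_sq' (by linarith [norm_nonneg (Matrix.toEuclideanCLM (𝕜 := ℝ) X ((WithLp.equiv 2 (Fin p → ℝ)).symm x))]) hb
    linarith

private lemma posdef_conj {p : ℕ} {A B : Matrix (Fin p) (Fin p) ℝ}
    (hA : A.PosDef) (hB : IsUnit B) : (Bᵀ * A * B).PosDef := by
  rw [posDef_iff_dotProduct_mulVec]
  constructor
  · have h := isHermitian_conjTranspose_mul_mul B hA.1
    rwa [conjTranspose_eq_transpose_of_trivial] at h
  · intro x hx
    have hBx : B *ᵥ x ≠ 0 := fun h0 => hx <| by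
      have := Matrix.mulVec_injective_iff_isUnit.mpr hB
      exact this (by simpa using h0)
    have := hA.dotProduct_mulVec_pos hBx
    have hBt : Bᵀ = Bᴴ := (conjTranspose_eq_transpose_of_trivial B).symm
    rw [hBt]
    simpa only [star_mulVec, dotProduct_mulVec, vecMul_vecMul] using this

open Matrix in
theorem cayley_transform_negdef {p : ℕ} (X : Matrix (Fin p) (Fin p) ℝ)
    (hX : ‖Matrix.toEuclideanCLM (𝕜 := ℝ) X‖ < 1) :
    IsUnit (X - 1) ∧
    (-((((X + 1) * (X - 1)⁻¹)ᵀ) + (X + 1) * (X - 1)⁻¹)).PosDef := by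
  have hU1 : IsUnit ((1 : Matrix (Fin p) (Fin p) ℝ) - X) := by
    have h := (Units.oneSub (Matrix.toEuclideanCLM (𝕜 := ℝ) X) hX).isUnit
    have h2 := h.map (Matrix.toEuclideanCLM (𝕜 := ℝ)).symm
    simpa [map_sub, _root_.map_one] using h2
  have hU : IsUnit (X - 1) := by
    have := hU1.neg
    rwa [neg_sub] at this
  refine ⟨hU, ?_⟩
  set S := (X - 1)⁻¹ with hS
  have hdet : IsUnit (X - 1).det := (Matrix.isUnit_iff_isUnit_det _).mp hU
  have h1 : S * (X - 1) = 1 := Matrix.nonsing_inv_mul _ hdet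
  have h2 : (X - 1) * S = 1 := Matrix.mul_nonsing_inv _ hdet
  have hT : Sᵀ * (X - 1)ᵀ = 1 := by rw [← transpose_mul, h2, transpose_one]
  have key : -(((X + 1) * S)ᵀ + (X + 1) * S)
      = Sᵀ * ((1 - Xᵀ * X) + (1 - Xᵀ * X)) * S := by
    have e1 : ((X + 1) * S)ᵀ = Sᵀ * (X + 1)ᵀ * ((X - 1) * S) := by
      rw [h2, mul_one, transpose_mul]
    have e2 : (X + 1) * S = (Sᵀ * (X - 1)ᵀ) * ((X + 1) * S) := by
      rw [hT, one_mul]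
    rw [e1, e2]
    have : Sᵀ * (X + 1)ᵀ * ((X - 1) * S) + Sᵀ * (X - 1)ᵀ * ((X + 1) * S)
        = Sᵀ * ((X + 1)ᵀ * (X - 1) + (X - 1)ᵀ * (X + 1)) * S := by
      noncomm_ring
    rw [this]
    have inner : -((X + 1)ᵀ * (X - 1) + (X - 1)ᵀ * (X + 1))
        = (1 - Xᵀ * X) + (1 - Xᵀ * X) := by
      simp only [transpose_add, transpose_sub, transpose_one]
      noncomm_ring
    rw [← inner]
    noncomm_ring
  rw [key]
  exact posdef_conj ((posdef_one_sub X hX).add (posdef_one_sub X hX))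
    (Matrix.isUnit_nonsing_inv_iff.mpr hU)
end

section
/- A $p \times p$ real matrix $A$ is an extreme point of the closed unit ball $\overline{\mathcal{B}}_{p,p} = \{X \in M_{p,p}(\mathbb{R}) : \|X\| \le 1\}$ (with respect to the operator norm) if and only if $A$ is orthogonal. -/
set_option maxHeartbeats 1000000
open scoped RealInnerProductSpace

lemma strict_conv_aux {E : Type*} [NormedAddCommGroup E] [InnerProductSpace ℝ E]
    {u v : E} {m a b : ℝ} (ha : 0 < a) (hb : 0 < b) (hab : a + b = 1)
    (hu : ‖u‖ ≤ m) (hv : ‖v‖ ≤ m) (h : ‖a • u + b • v‖ = m) : u = v := by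
  have hI : ⟪u, v⟫ ≤ ‖u‖ * ‖v‖ := real_inner_le_norm u v
  have hexp : m ^ 2 = a^2 * ‖u‖^2 + 2*(a*b)*⟪u,v⟫ + b^2 * ‖v‖^2 := by
    rw [← h, norm_add_sq_real]
    simp [norm_smul, real_inner_smul_left, real_inner_smul_right,
      abs_of_pos ha, abs_of_pos hb]
    ring
  have h2 : ‖u - v‖ ^ 2 = ‖u‖^2 - 2*⟪u,v⟫ + ‖v‖^2 := norm_sub_sq_real u v
  have hm0 : 0 ≤ m := h ▸ norm_nonneg _
  have hs0 : 0 ≤ ‖u‖ := norm_nonneg u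
  have ht0 : 0 ≤ ‖v‖ := norm_nonneg v
  have step1 : m ^ 2 ≤ (a * ‖u‖ + b * ‖v‖) ^ 2 := by
    nlinarith [mul_nonneg (mul_pos ha hb).le (sub_nonneg.2 hI)]
  have hX0 : 0 ≤ a * ‖u‖ + b * ‖v‖ := by positivity
  have step2 : m ≤ a * ‖u‖ + b * ‖v‖ := by nlinarith
  have step3 : a * ‖u‖ + b * ‖v‖ ≤ m := by nlinarith
  have heq : a * ‖u‖ + b * ‖v‖ = m := le_antisymm step3 step2
  have h4 : a * (m - ‖u‖) + b * (m - ‖v‖) = 0 := by linear_combination m * hab - heq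
  have h5 : a * (m - ‖u‖) = 0 :=
    le_antisymm (by linarith [mul_nonneg hb.le (sub_nonneg.2 hv)])
      (mul_nonneg ha.le (sub_nonneg.2 hu))
  have h6 : b * (m - ‖v‖) = 0 :=
    le_antisymm (by linarith [mul_nonneg ha.le (sub_nonneg.2 hu)])
      (mul_nonneg hb.le (sub_nonneg.2 hv))
  have hsu : ‖u‖ = m := by
    rcases mul_eq_zero.mp h5 with h' | h'
    · exact absurd h' ha.ne'
    · linarith
  have hsv : ‖v‖ = m := by
    rcases mul_eq_zero.mp h6 with h' | h'
    · exact absurd h' hb.ne'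
    · linarith
  have hIm : ⟪u, v⟫ = m ^ 2 := by
    have hab0 : (2 * (a * b)) ≠ 0 := by positivity
    apply mul_left_cancel₀ hab0
    rw [hsu, hsv] at hexp
    linear_combination -hexp - m^2 * (1 + a + b) * hab
  have hz : ‖u - v‖ ^ 2 = 0 := by rw [h2, hsu, hsv, hIm]; ring
  have : ‖u - v‖ = 0 := by
    have := norm_nonneg (u - v); nlinarith
  exact sub_eq_zero.mp (norm_eq_zero.mp this)

open ContinuousLinearMap

variable {p : ℕ}
local notation "E" => EuclideanSpace ℝ (Fin p)

lemma isometry_norm_apply (T : E →L[ℝ] E) (h : adjoint T * T = 1) (x : E) :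
    ‖T x‖ = ‖x‖ := by
  have h1 : ⟪T x, T x⟫ = ⟪x, x⟫ := by
    rw [← adjoint_inner_left]
    have : adjoint T (T x) = x := by
      have := congrArg (fun S => S x) h
      simpa using this
    rw [this]
  have := congrArg Real.sqrt h1
  rwa [real_inner_self_eq_norm_mul_norm, real_inner_self_eq_norm_mul_norm,
    Real.sqrt_mul_self (norm_nonneg _), Real.sqrt_mul_self (norm_nonneg _)] at this

lemma extreme_of_orth (T : E →L[ℝ] E) (h : adjoint T * T = 1) :
    T ∈ Set.extremePoints ℝ {X : E →L[ℝ] E | ‖X‖ ≤ 1} := by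
  have hiso := isometry_norm_apply T h
  refine ⟨?_, ?_⟩
  · exact opNorm_le_bound T zero_le_one (fun x => by rw [hiso, one_mul])
  · rintro X₁ hX₁ X₂ hX₂ ⟨a, b, ha, hb, hab, hsum⟩
    have key : X₁ = X₂ := by
      ext1 x
      have h' : a • X₁ x + b • X₂ x = T x := by rw [← hsum]; simp
      refine strict_conv_aux (u := X₁ x) (v := X₂ x) (m := ‖x‖) ha hb hab
        (le_trans (X₁.le_opNorm x) (mul_le_of_le_one_left (norm_nonneg x) hX₁))
        (le_trans (X₂.le_opNorm x) (mul_le_of_le_one_left (norm_nonneg x) hX₂))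
        (by rw [h', hiso])
    subst key
    have hX : X₁ = T := by
      ext1 x
      rw [← hsum]
      simp only [ContinuousLinearMap.add_apply, ContinuousLinearMap.coe_smul', Pi.smul_apply]
      rw [← add_smul, hab, one_smul]
    exact hX


lemma perturb_norm_le (T : E →L[ℝ] E) (hT : ‖T‖ ≤ 1) {v w : E} {d : ℝ}
    (hv : ‖v‖ = 1) (hw : ‖w‖ = 1) (hd0 : 0 ≤ d) (hd1 : d < 1)
    (hSv : (adjoint T) (T v) = d • v) (haw : (adjoint T) w = Real.sqrt d • v)
    (σ : ℝ) (hσ : σ = 1 ∨ σ = -1) :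
    ‖T + (σ * (1 - Real.sqrt d)) • (innerSL ℝ v).smulRight w‖ ≤ 1 := by
  set c := Real.sqrt d with hc
  have hc0 : 0 ≤ c := Real.sqrt_nonneg d
  have hc2 : c ^ 2 = d := Real.sq_sqrt hd0
  have hc1 : c < 1 := by nlinarith
  set ε := 1 - c with hε
  refine opNorm_le_bound _ zero_le_one (fun x => ?_)
  rw [one_mul]
  set α := ⟪v, x⟫ with hα
  set y := x - α • v with hy
  have hvv : ⟪v, v⟫ = (1:ℝ) := by
    rw [real_inner_self_eq_norm_mul_norm, hv]; norm_num
  have hvy : ⟪v, y⟫ = 0 := by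
    rw [hy, inner_sub_right, real_inner_smul_right, hvv, mul_one, hα, sub_self]
  have hxdecomp : x = α • v + y := by simp [hy]
  have hx2 : ‖x‖ ^ 2 = α ^ 2 + ‖y‖ ^ 2 := by
    rw [hxdecomp, norm_add_sq_real, real_inner_smul_left, hvy, norm_smul]
    rw [Real.norm_eq_abs, hv]
    rw [mul_zero, mul_zero]
    nlinarith [sq_abs α]
  have hTxw : ⟪T x, w⟫ = c * α := by
    rw [real_inner_comm, ← adjoint_inner_left, haw, real_inner_smul_left, hα]
  have hSy_sym : ⟪v, (adjoint T) (T y)⟫ = 0 := by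
    rw [adjoint_inner_right, ← adjoint_inner_left, hSv, real_inner_smul_left, hvy, mul_zero]
  have hTx2 : ‖T x‖ ^ 2 = α ^ 2 * d + ‖T y‖ ^ 2 := by
    have h1 : ‖T x‖ ^ 2 = ⟪T x, T x⟫ := (real_inner_self_eq_norm_sq _).symm
    have h2 : ‖T y‖ ^ 2 = ⟪T y, T y⟫ := (real_inner_self_eq_norm_sq _).symm
    rw [h1, h2, hxdecomp, map_add, map_smul, inner_add_add_self]
    have e1 : ⟪T v, T v⟫ = d := by
      rw [← adjoint_inner_left, hSv, real_inner_smul_left, hvv, mul_one]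
    have e2 : ⟪T v, T y⟫ = 0 := by
      rw [← adjoint_inner_right]; exact hSy_sym
    have e2' : ⟪T y, T v⟫ = 0 := by rw [real_inner_comm]; exact e2
    simp only [real_inner_smul_left, real_inner_smul_right, e1, e2, e2', mul_zero,
      add_zero, zero_add]
    ring
  have hTy : ‖T y‖ ≤ ‖y‖ := le_trans (T.le_opNorm y) (mul_le_of_le_one_left (norm_nonneg y) hT)
  have happly : (T + (σ * (1 - c)) • (innerSL ℝ v).smulRight w) x
      = T x + (σ * ε * α) • w := by
    simp [smul_smul, hα, hε]
  rw [happly]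
  have hσ2 : σ ^ 2 = 1 := by rcases hσ with h | h <;> rw [h] <;> norm_num
  have hbound : ‖T x + (σ * ε * α) • w‖ ^ 2 ≤ ‖x‖ ^ 2 := by
    rw [norm_add_sq_real, real_inner_smul_right, hTxw, norm_smul, hTx2, hx2]
    have hw2 : (‖σ * ε * α‖ * ‖w‖)^2 = σ^2 * ε^2 * α^2 := by
      rw [Real.norm_eq_abs, hw, mul_one, sq_abs]; ring
    rw [hw2, hσ2]
    have key : (c + σ * ε) ^ 2 ≤ 1 := by
      rcases hσ with h | h
      · rw [h, hε]
        have : c + 1 * (1 - c) = 1 := by ring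
        rw [this]; norm_num
      · rw [h, hε]
        have hcc : 0 ≤ c * (1 - c) := mul_nonneg hc0 (by linarith)
        nlinarith [hcc]
    have t1 : α^2*d + 2*(σ*ε*α*(c*α)) + 1*ε^2*α^2 = α^2*(c+σ*ε)^2 := by
      linear_combination (-α^2) * hc2 + (-(ε^2*α^2)) * hσ2
    have t2 : α^2*(c+σ*ε)^2 ≤ α^2 * 1 := mul_le_mul_of_nonneg_left key (sq_nonneg α)
    have t3 : ‖T y‖^2 ≤ ‖y‖^2 := pow_le_pow_left₀ (norm_nonneg (T y)) hTy 2
    linarith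
  have := Real.sqrt_le_sqrt hbound
  rwa [Real.sqrt_sq (norm_nonneg _), Real.sqrt_sq (norm_nonneg _)] at this


lemma exists_w (T : E →L[ℝ] E) {v : E} {d : ℝ} (hv : ‖v‖ = 1) (hd0 : 0 ≤ d)
    (hSv : (adjoint T) (T v) = d • v) :
    ∃ w : E, ‖w‖ = 1 ∧ (adjoint T) w = Real.sqrt d • v := by
  have hvv : ⟪v, v⟫ = (1:ℝ) := by
    rw [real_inner_self_eq_norm_mul_norm, hv]; norm_num
  have hTv2 : ‖T v‖ ^ 2 = d := by
    rw [← real_inner_self_eq_norm_sq, ← adjoint_inner_right, hSv, real_inner_smul_right,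
      hvv, mul_one]
  rcases eq_or_lt_of_le hd0 with hzero | hpos
  · -- d = 0
    have hd : d = 0 := hzero.symm
    have hTv : T v = 0 := by
      have : ‖T v‖ = 0 := by nlinarith [norm_nonneg (T v)]
      simpa using this
    have hvne : v ≠ 0 := by intro h; rw [h] at hv; simp at hv
    -- adjoint T is not injective
    have hnotinj : ¬ Function.Injective (adjoint T) := by
      intro hinj
      have hsurj : Function.Surjective ((adjoint T : E →ₗ[ℝ] E)) :=
        (LinearMap.injective_iff_surjective).mp hinj
      obtain ⟨z, hz⟩ := hsurj v
      have hz' : (adjoint T) z = v := hz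
      have h2 : ⟪v, (adjoint T) z⟫ = (0:ℝ) := by
        rw [adjoint_inner_right, hTv, inner_zero_left]
      rw [hz', hvv] at h2; norm_num at h2
    rw [Function.not_injective_iff] at hnotinj
    obtain ⟨a, b, hab, hne⟩ := hnotinj
    refine ⟨‖a - b‖⁻¹ • (a - b), ?_, ?_⟩
    · rw [norm_smul, norm_inv, norm_norm, inv_mul_cancel₀]
      exact norm_ne_zero_iff.2 (sub_ne_zero.2 hne)
    · rw [map_smul, map_sub, hab, sub_self, smul_zero, hd, Real.sqrt_zero, zero_smul]
  · -- d > 0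
    have hsd : 0 < Real.sqrt d := Real.sqrt_pos.2 hpos
    refine ⟨(Real.sqrt d)⁻¹ • T v, ?_, ?_⟩
    · rw [norm_smul, norm_inv, Real.norm_eq_abs, abs_of_pos hsd]
      have hTvn : ‖T v‖ = Real.sqrt d := by
        rw [← Real.sqrt_sq (norm_nonneg (T v)), hTv2]
      rw [hTvn, inv_mul_cancel₀ hsd.ne']
    · rw [map_smul, hSv, smul_smul]
      congr 1
      rw [inv_mul_eq_div, div_eq_iff hsd.ne']
      exact (Real.mul_self_sqrt hd0).symm

theorem clm_orth_of_extreme (T : E →L[ℝ] E)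
    (hext : T ∈ Set.extremePoints ℝ {X : E →L[ℝ] E | ‖X‖ ≤ 1}) :
    adjoint T * T = 1 := by
  have hT1 : ‖T‖ ≤ 1 := hext.1
  set Slin : E →ₗ[ℝ] E := ((adjoint T * T : E →L[ℝ] E) : E →ₗ[ℝ] E) with hSlin
  have hsym : Slin.IsSymmetric := by
    intro x y
    show ⟪(adjoint T * T) x, y⟫ = ⟪x, (adjoint T * T) y⟫
    rw [mul_apply_eq_comp, mul_apply_eq_comp, adjoint_inner_left, adjoint_inner_right]
  have hn : Module.finrank ℝ (EuclideanSpace ℝ (Fin p)) = p := finrank_euclideanSpace_fin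
  set b := hsym.eigenvectorBasis hn with hb
  set μ := hsym.eigenvalues hn with hμ
  have key : ∀ i, μ i = 1 := by
    intro i
    have hevec := hsym.hasEigenvector_eigenvectorBasis hn i
    have happ : Slin (b i) = μ i • b i := hevec.apply_eq_smul
    have hnorm : ‖b i‖ = 1 := b.orthonormal.1 i
    have hvv : ⟪b i, b i⟫ = (1:ℝ) := by
      rw [real_inner_self_eq_norm_mul_norm, hnorm]; norm_num
    have hSv : (adjoint T) (T (b i)) = μ i • b i := happ
    have hd : μ i = ‖T (b i)‖ ^ 2 := by
      rw [← real_inner_self_eq_norm_sq, ← adjoint_inner_right, hSv,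
        real_inner_smul_right, hvv, mul_one]
    have hd0 : 0 ≤ μ i := hd ▸ sq_nonneg _
    have hdle : μ i ≤ 1 := by
      have h1 : ‖T (b i)‖ ≤ 1 := by
        have := T.le_opNorm (b i)
        rw [hnorm, mul_one] at this
        linarith
      nlinarith [norm_nonneg (T (b i))]
    by_contra hne
    have hd1 : μ i < 1 := lt_of_le_of_ne hdle hne
    obtain ⟨w, hw, haw⟩ := exists_w T hnorm hd0 hSv
    set M : E →L[ℝ] E := (innerSL ℝ (b i)).smulRight w with hM
    set ε := 1 - Real.sqrt (μ i) with hε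
    have hε0 : 0 < ε := by
      rw [hε]
      have : Real.sqrt (μ i) < 1 := by
        nlinarith [Real.sq_sqrt hd0, Real.sqrt_nonneg (μ i)]
      linarith
    set X₁ := T + ((1:ℝ) * ε) • M with hX₁
    set X₂ := T + ((-1:ℝ) * ε) • M with hX₂
    have hm₁ : X₁ ∈ {X : E →L[ℝ] E | ‖X‖ ≤ 1} :=
      perturb_norm_le T hT1 hnorm hw hd0 hd1 hSv haw 1 (Or.inl rfl)
    have hm₂ : X₂ ∈ {X : E →L[ℝ] E | ‖X‖ ≤ 1} :=
      perturb_norm_le T hT1 hnorm hw hd0 hd1 hSv haw (-1) (Or.inr rfl)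
    have hseg : T ∈ openSegment ℝ X₁ X₂ := by
      refine ⟨1/2, 1/2, by norm_num, by norm_num, by norm_num, ?_⟩
      ext1 x
      simp only [hX₁, hX₂, ContinuousLinearMap.add_apply, ContinuousLinearMap.coe_smul',
        Pi.smul_apply, smul_add, ContinuousLinearMap.smul_apply]
      module
    have hX₁T : X₁ = T := (hext.2 hm₁ hm₂ hseg)
    have hMv : M (b i) = w := by
      simp [hM, hvv]
    have : ((1:ℝ) * ε) • M (b i) = 0 := by
      have h0 : ((1:ℝ) * ε) • M = 0 := by
        have := hX₁T
        rw [hX₁] at this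
        have h' := congrArg (fun X => X - T) this
        simpa using h'
      calc ((1:ℝ) * ε) • M (b i) = (((1:ℝ) * ε) • M) (b i) := rfl
        _ = (0 : E →L[ℝ] E) (b i) := by rw [h0]
        _ = 0 := rfl
    rw [hMv, one_mul] at this
    have : w = 0 := by
      have := smul_eq_zero.mp this
      rcases this with h | h
      · exact absurd h hε0.ne'
      · exact h
    rw [this] at hw
    simp at hw
  have hSid : Slin = LinearMap.id := by
    apply b.toBasis.ext
    intro i
    have happ : Slin (b i) = μ i • b i :=
      (hsym.hasEigenvector_eigenvectorBasis hn i).apply_eq_smul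
    rw [OrthonormalBasis.coe_toBasis, happ, key i, one_smul]
    rfl
  ext1 x
  show Slin x = x
  simpa using LinearMap.congr_fun hSid x


theorem extreme_point_unit_ball_iff_orthogonal {p : ℕ}
    (A : Matrix (Fin p) (Fin p) ℝ) :
    A ∈ Set.extremePoints ℝ
        {X : Matrix (Fin p) (Fin p) ℝ | ‖Matrix.toEuclideanCLM (𝕜 := ℝ) X‖ ≤ 1} ↔
      A ∈ Matrix.orthogonalGroup (Fin p) ℝ := by
  classical
  set φ := Matrix.toEuclideanCLM (𝕜 := ℝ) (n := Fin p) with hφ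
  let e : Matrix (Fin p) (Fin p) ℝ ≃ₗ[ℝ] (EuclideanSpace ℝ (Fin p) →L[ℝ] EuclideanSpace ℝ (Fin p)) :=
    { toFun := φ
      map_add' := fun X Y => map_add φ X Y
      map_smul' := fun r X => map_smul φ r X
      invFun := φ.symm
      left_inv := fun X => φ.symm_apply_apply X
      right_inv := fun Y => φ.apply_symm_apply Y }
  have hset : e '' {X : Matrix (Fin p) (Fin p) ℝ | ‖φ X‖ ≤ 1}
      = {Y : EuclideanSpace ℝ (Fin p) →L[ℝ] EuclideanSpace ℝ (Fin p) | ‖Y‖ ≤ 1} := by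
    ext Y
    constructor
    · rintro ⟨X, hX, rfl⟩; exact hX
    · intro hY
      refine ⟨φ.symm Y, ?_, ?_⟩
      · show ‖φ (φ.symm Y)‖ ≤ 1
        rw [φ.apply_symm_apply]; exact hY
      · show φ (φ.symm Y) = Y
        exact φ.apply_symm_apply Y
  have himg := image_extremePoints e ({X : Matrix (Fin p) (Fin p) ℝ | ‖φ X‖ ≤ 1})
  rw [hset] at himg
  have hmem : A ∈ Set.extremePoints ℝ {X : Matrix (Fin p) (Fin p) ℝ | ‖φ X‖ ≤ 1}
      ↔ φ A ∈ Set.extremePoints ℝ {Y : EuclideanSpace ℝ (Fin p) →L[ℝ] EuclideanSpace ℝ (Fin p) | ‖Y‖ ≤ 1} := by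
    rw [← himg]
    exact (e.injective.mem_set_image).symm
  rw [hmem, Matrix.mem_orthogonalGroup_iff']
  constructor
  · intro hext
    have h := clm_orth_of_extreme (φ A) hext
    have : φ (star A * A) = φ 1 := by
      rw [map_mul, map_star, map_one, star_eq_adjoint]
      exact h
    exact φ.injective this
  · intro h
    apply extreme_of_orth
    rw [← star_eq_adjoint, ← map_star, ← map_mul, Matrix.star_eq_conjTranspose,
      Matrix.conjTranspose_eq_transpose_of_trivial, h, map_one]
end
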